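/- For all integers d ≥ 0, a ≥ 1 and n ≥ 2^a, the graph T_d(P_n) has treedepth at least a·d + 1, where P_n is the path on n vertices. -/

import Mathlib

/-- `le` is the (reflexive) ancestor order of a rooted forest on the vertices of
`G` in which every edge of `G` joins a vertex to an ancestor or descendant:
it is a partial order whose principal down-sets are chains, and every edge of
`G` is comparable. -/
def IsForestOrder {V : Type} (G : SimpleGraph V) (le : V → V → Prop) : Prop :=
  Reflexive le ∧ Transitive le ∧ AntiSymmetric le ∧
    (∀ v x y, le x v → le y v → le x y ∨ le y x) ∧
    ∀ ⦃u v : V⦄, G.Adj u v → le u v ∨ le v u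

/-- `G` has treedepth at most `n`: there is a rooted forest of depth at most
`n - 1` on `V(G)` (each vertex has at most `n` ancestors, itself included)
whose ancestor-descendant pairs cover all edges of `G`. -/
def TreedepthLE {V : Type} (G : SimpleGraph V) (n : ℕ) : Prop :=
  ∃ le : V → V → Prop, IsForestOrder G le ∧ ∀ v, {u | le u v}.ncard ≤ n

/-- The treedepth of `G`. -/
noncomputable def treedepth {V : Type} (G : SimpleGraph V) : ℕ :=
  sInf {n | TreedepthLE G n}

/-- Vertices of `T_d(H)`, where `W` is the vertex type of `H`:
`T_0(H)` is a single vertex (the handle); `T_{d+1}(H)` consists of a new handle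
together with, for each vertex `x` of `H`, a copy of `T_d(H)` whose handle is
identified with `x`. -/
def TVert (W : Type) : ℕ → Type
  | 0 => Unit
  | d + 1 => Unit ⊕ (W × TVert W d)

/-- The handle of `T_d(H)`. -/
def THandle (W : Type) : ∀ d, TVert W d
  | 0 => ()
  | _ + 1 => Sum.inl ()

/-- Adjacency of `T_d(H)`: the handle is adjacent to all vertices of the copy of
`H` (the handles of the attached copies of `T_{d-1}(H)`), two such vertices are
adjacent iff they are adjacent in `H`, and within each attached copy adjacency
is that of `T_{d-1}(H)`. -/
def TAdj {W : Type} (H : SimpleGraph W) : ∀ d, TVert W d → TVert W d → Prop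
  | 0, _, _ => False
  | d + 1, u, v =>
    match u, v with
    | Sum.inl _, Sum.inl _ => False
    | Sum.inl _, Sum.inr (_, b) => b = THandle W d
    | Sum.inr (_, a), Sum.inl _ => a = THandle W d
    | Sum.inr (x, a), Sum.inr (y, b) =>
      (x = y ∧ TAdj H d a b) ∨ (H.Adj x y ∧ a = THandle W d ∧ b = THandle W d)

/-- The graph `T_d(H)`. -/
def TGraph {W : Type} (H : SimpleGraph W) (d : ℕ) : SimpleGraph (TVert W d) :=
  SimpleGraph.fromRel (TAdj H d)

/-! ### Auxiliary material -/

instance TVert.finite (W : Type) [Finite W] : ∀ d, Finite (TVert W d)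
  | 0 => inferInstanceAs (Finite Unit)
  | d + 1 => have := TVert.finite W d; inferInstanceAs (Finite (Unit ⊕ W × TVert W d))

/-- Inclusion of the copy of `T_d(H)` attached at `x` into `T_{d+1}(H)`. -/
def cpy {W : Type} {d : ℕ} (x : W) (b : TVert W d) : TVert W (d + 1) := Sum.inr (x, b)

lemma cpy_inj {W : Type} {d : ℕ} {x y : W} {a b : TVert W d} (h : cpy x a = cpy y b) :
    x = y ∧ a = b := by
  have h' : (Sum.inr (x, a) : Unit ⊕ W × TVert W d) = Sum.inr (y, b) := h
  injection h' with h2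
  exact ⟨congrArg Prod.fst h2, congrArg Prod.snd h2⟩

lemma tgraph_adj {W : Type} (H : SimpleGraph W) (d : ℕ) (u v : TVert W d) :
    (TGraph H d).Adj u v ↔ u ≠ v ∧ (TAdj H d u v ∨ TAdj H d v u) :=
  SimpleGraph.fromRel_adj _ _ _

lemma adj_cpy {W : Type} {H : SimpleGraph W} {d : ℕ} (x : W) {a b : TVert W d}
    (hab : (TGraph H d).Adj a b) :
    (TGraph H (d + 1)).Adj (cpy x a) (cpy x b) := by
  rw [tgraph_adj] at hab ⊢
  obtain ⟨hne, h⟩ := hab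
  refine ⟨fun hc => hne (cpy_inj hc).2, ?_⟩
  rcases h with h | h
  · exact Or.inl (Or.inl ⟨rfl, h⟩)
  · exact Or.inr (Or.inl ⟨rfl, h⟩)

lemma adj_handle_cpy {W : Type} {H : SimpleGraph W} {d : ℕ} (x : W) :
    (TGraph H (d + 1)).Adj (Sum.inl () : TVert W (d + 1)) (cpy x (THandle W d)) := by
  refine (tgraph_adj H (d + 1) _ _).2 ?_
  exact ⟨fun hc => by simp [cpy] at hc, Or.inl rfl⟩

lemma adj_cpy_handles {W : Type} {H : SimpleGraph W} {d : ℕ} {x y : W} (hxy : H.Adj x y) :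
    (TGraph H (d + 1)).Adj (cpy x (THandle W d)) (cpy y (THandle W d)) := by
  rw [tgraph_adj]
  refine ⟨fun hc => hxy.ne (cpy_inj hc).1, Or.inl (Or.inr ⟨hxy, rfl, rfl⟩)⟩

/-- The copy map is a graph homomorphism. -/
def cpyHom {W : Type} (H : SimpleGraph W) (d : ℕ) (x : W) :
    TGraph H d →g TGraph H (d + 1) where
  toFun := cpy x
  map_rel' := adj_cpy x

lemma tgraph_reachable_handle {W : Type} (H : SimpleGraph W) :
    ∀ d (v : TVert W d), (TGraph H d).Reachable (THandle W d) v
  | 0, _ => SimpleGraph.Reachable.refl _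
  | d + 1, v => by
    match v with
    | Sum.inl () => exact SimpleGraph.Reachable.refl _
    | Sum.inr (x, b) =>
      have h1 : (TGraph H (d + 1)).Reachable (Sum.inl ()) (cpy x (THandle W d)) :=
        (adj_handle_cpy x).reachable
      have h2 := (tgraph_reachable_handle H d b).map (cpyHom H d x)
      exact h1.trans h2

lemma tgraph_connected {W : Type} (H : SimpleGraph W) (d : ℕ) : (TGraph H d).Connected := by
  haveI : Nonempty (TVert W d) := ⟨THandle W d⟩
  exact ⟨fun u v => ((tgraph_reachable_handle H d u).symm).trans (tgraph_reachable_handle H d v)⟩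

section ForestOrder

variable {V : Type} {G : SimpleGraph V} {le : V → V → Prop}

lemma exists_minimalOn (h : IsForestOrder G le) {S : Set V} (hfin : S.Finite)
    (hne : S.Nonempty) : ∃ m ∈ S, ∀ u ∈ S, le u m → u = m := by
  obtain ⟨m, hm, hmin⟩ :=
    Set.exists_min_image S (fun t => {y ∈ S | le y t}.ncard) hfin hne
  refine ⟨m, hm, fun u hu hum => ?_⟩
  by_contra hne'
  have hss : {y ∈ S | le y u} ⊂ {y ∈ S | le y m} := by
    constructor
    · exact fun y hy => ⟨hy.1, h.2.1 hy.2 hum⟩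
    · intro hsup
      have hmem : m ∈ {y ∈ S | le y u} := hsup ⟨hm, h.1 m⟩
      exact hne' (h.2.2.1 hum hmem.2)
  have := Set.ncard_lt_ncard hss (hfin.subset (fun y hy => hy.1))
  exact absurd (hmin u hu) (by omega)

lemma forest_step (h : IsForestOrder G le) {S : Set V} {m u v : V}
    (hmin : ∀ x ∈ S, le x m → x = m) (hv : v ∈ S)
    (hmu : le m u) (huv : G.Adj u v) : le m v := by
  rcases h.2.2.2.2 huv with h1 | h1
  · exact h.2.1 hmu h1
  · rcases h.2.2.2.1 u m v hmu h1 with h2 | h2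
    · exact h2
    · have := hmin v hv h2
      subst this
      exact h.1 v

lemma exists_min_connected (h : IsForestOrder G le) [Finite V] (hc : G.Connected) :
    ∃ m, ∀ u, le m u := by
  obtain ⟨m, -, hmin⟩ := exists_minimalOn h (S := Set.univ) Set.finite_univ
    ⟨hc.nonempty.some, trivial⟩
  refine ⟨m, fun u => ?_⟩
  obtain ⟨p⟩ := hc.preconnected m u
  have key : ∀ {x y : V}, G.Walk x y → le m x → le m y := by
    intro x y p
    induction p with
    | nil => exact id
    | cons hadj p ih =>
      intro hx
      exact ih (forest_step (S := Set.univ) h (fun z _ hz => hmin z trivial hz)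
        (Set.mem_univ _) hx hadj)
  exact key p (h.1 m)

end ForestOrder

/-! ### Paths -/

section Path

variable {n : ℕ} {le : Fin n → Fin n → Prop}

lemma interval_min (h : IsForestOrder (SimpleGraph.pathGraph n) le)
    (i s : ℕ) (hs : 1 ≤ s) (hn : i + s ≤ n) :
    ∃ m : Fin n, (i ≤ m.val ∧ m.val < i + s) ∧
      ∀ t : Fin n, i ≤ t.val → t.val < i + s → le m t := by
  set S : Set (Fin n) := {t | i ≤ t.val ∧ t.val < i + s} with hS
  have hne : S.Nonempty := ⟨⟨i, by omega⟩, by simp [hS]; omega⟩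
  obtain ⟨m, hm, hmin⟩ := exists_minimalOn h (Set.toFinite S) hne
  have hm' : i ≤ m.val ∧ m.val < i + s := hm
  -- upward propagation
  have up : ∀ k (hk : m.val + k < i + s), le m ⟨m.val + k, by omega⟩ := by
    intro k
    induction k with
    | zero => intro _; have : (⟨m.val + 0, by omega⟩ : Fin n) = m := by ext; simp
              rw [this]; exact h.1 m
    | succ k ih =>
      intro hk
      have hk' : m.val + k < i + s := by omega
      have hadj : (SimpleGraph.pathGraph n).Adj ⟨m.val + k, by omega⟩
          ⟨m.val + (k + 1), by omega⟩ := by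
        rw [SimpleGraph.pathGraph_adj]; left; simp; omega
      exact forest_step h hmin (by constructor <;> simp <;> omega) (ih hk') hadj
  -- downward propagation
  have down : ∀ k (hk : i + k ≤ m.val), le m ⟨m.val - k, by omega⟩ := by
    intro k
    induction k with
    | zero => intro _; have : (⟨m.val - 0, by omega⟩ : Fin n) = m := by ext; simp
              rw [this]; exact h.1 m
    | succ k ih =>
      intro hk
      have hk' : i + k ≤ m.val := by omega
      have hadj : (SimpleGraph.pathGraph n).Adj ⟨m.val - k, by omega⟩
          ⟨m.val - (k + 1), by omega⟩ := by
        rw [SimpleGraph.pathGraph_adj]; right; simp; omega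
      exact forest_step h hmin (by constructor <;> simp <;> omega) (ih hk') hadj
  refine ⟨m, hm', fun t ht1 ht2 => ?_⟩
  rcases le_or_gt m.val t.val with hc | hc
  · have := up (t.val - m.val) (by omega)
    have he : (⟨m.val + (t.val - m.val), by omega⟩ : Fin n) = t := by ext; simp; omega
    rwa [he] at this
  · have := down (m.val - t.val) (by omega)
    have he : (⟨m.val - (m.val - t.val), by omega⟩ : Fin n) = t := by ext; simp; omega
    rwa [he] at this

lemma path_claim (h : IsForestOrder (SimpleGraph.pathGraph n) le) :
    ∀ (k i : ℕ), i + 2 ^ k ≤ n →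
      ∃ x : Fin n, (i ≤ x.val ∧ x.val < i + 2 ^ k) ∧
        k + 1 ≤ {y : Fin n | le y x ∧ i ≤ y.val ∧ y.val < i + 2 ^ k}.ncard := by
  intro k
  induction k with
  | zero =>
    intro i hi
    refine ⟨⟨i, by omega⟩, ⟨by simp, by simp⟩, ?_⟩
    have hmem : (⟨i, by omega⟩ : Fin n) ∈
        {y : Fin n | le y ⟨i, by omega⟩ ∧ i ≤ y.val ∧ y.val < i + 2 ^ 0} :=
      ⟨h.1 _, by simp, by simp⟩
    exact (Set.ncard_pos (Set.toFinite _)).2 ⟨_, hmem⟩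
  | succ k ih =>
    intro i hi
    have hpow : (2:ℕ) ^ k + 2 ^ k = 2 ^ (k + 1) := by ring
    obtain ⟨m, hm, hmle⟩ := interval_min h i (2 ^ (k + 1)) Nat.one_le_two_pow hi
    by_cases hside : i + 2 ^ k ≤ m.val
    · -- use left subinterval [i, i + 2^k)
      obtain ⟨x, hx, hcard⟩ := ih i (by omega)
      refine ⟨x, ⟨hx.1, by omega⟩, ?_⟩
      have hmx : le m x := hmle x (by omega) (by omega)
      have hsub : insert m {y : Fin n | le y x ∧ i ≤ y.val ∧ y.val < i + 2 ^ k} ⊆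
          {y : Fin n | le y x ∧ i ≤ y.val ∧ y.val < i + 2 ^ (k + 1)} := by
        intro y hy
        rcases hy with rfl | hy
        · exact ⟨hmx, by omega, by omega⟩
        · obtain ⟨hy1, hy2, hy3⟩ := hy
          exact ⟨hy1, hy2, by omega⟩
      have hnotmem : m ∉ {y : Fin n | le y x ∧ i ≤ y.val ∧ y.val < i + 2 ^ k} := by
        intro hmem
        exact absurd hmem.2.2 (by omega)
      calc k + 1 + 1 ≤ {y : Fin n | le y x ∧ i ≤ y.val ∧ y.val < i + 2 ^ k}.ncard + 1 := by omega
        _ = (insert m {y : Fin n | le y x ∧ i ≤ y.val ∧ y.val < i + 2 ^ k}).ncard := by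
            rw [Set.ncard_insert_of_notMem hnotmem (Set.toFinite _)]
        _ ≤ _ := Set.ncard_le_ncard hsub (Set.toFinite _)
    · -- use right subinterval [m+1, m+1+2^k)
      push_neg at hside
      obtain ⟨x, hx, hcard⟩ := ih (m.val + 1) (by omega)
      refine ⟨x, ⟨by omega, by omega⟩, ?_⟩
      have hmx : le m x := hmle x (by omega) (by omega)
      have hsub : insert m {y : Fin n | le y x ∧ m.val + 1 ≤ y.val ∧ y.val < m.val + 1 + 2 ^ k} ⊆
          {y : Fin n | le y x ∧ i ≤ y.val ∧ y.val < i + 2 ^ (k + 1)} := by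
        intro y hy
        rcases hy with rfl | hy
        · exact ⟨hmx, by omega, by omega⟩
        · obtain ⟨hy1, hy2, hy3⟩ := hy
          exact ⟨hy1, by omega, by omega⟩
      have hnotmem : m ∉ {y : Fin n | le y x ∧ m.val + 1 ≤ y.val ∧ y.val < m.val + 1 + 2 ^ k} := by
        intro hmem
        exact absurd hmem.2.1 (by omega)
      calc k + 1 + 1
          ≤ {y : Fin n | le y x ∧ m.val + 1 ≤ y.val ∧ y.val < m.val + 1 + 2 ^ k}.ncard + 1 := by
            omega
        _ = (insert m {y : Fin n | le y x ∧ m.val + 1 ≤ y.val ∧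
              y.val < m.val + 1 + 2 ^ k}).ncard := by
            rw [Set.ncard_insert_of_notMem hnotmem (Set.toFinite _)]
        _ ≤ _ := Set.ncard_le_ncard hsub (Set.toFinite _)

lemma path_base (a : ℕ) (hn : 2 ^ a ≤ n) (h : IsForestOrder (SimpleGraph.pathGraph n) le) :
    ∃ x, a + 1 ≤ {y | le y x}.ncard := by
  obtain ⟨x, -, hx⟩ := path_claim h a 0 (by simpa using hn)
  exact ⟨x, hx.trans (Set.ncard_le_ncard (fun y hy => hy.1) (Set.toFinite _))⟩

end Path

/-! ### The main induction -/

lemma restrict_forest {W : Type} {H : SimpleGraph W} {d : ℕ}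
    {le : TVert W (d + 1) → TVert W (d + 1) → Prop}
    (h : IsForestOrder (TGraph H (d + 1)) le) (x : W) :
    IsForestOrder (TGraph H d) (fun a b => le (cpy x a) (cpy x b)) := by
  refine ⟨fun a => h.1 _, fun a b c hab hbc => h.2.1 hab hbc, ?_, ?_, ?_⟩
  · intro a b h1 h2
    exact (cpy_inj (h.2.2.1 h1 h2)).2
  · intro v p q h1 h2
    exact h.2.2.2.1 _ _ _ h1 h2
  · intro a b hab
    exact h.2.2.2.2 (adj_cpy x hab)

lemma tgraph_lower {W : Type} [Finite W] (H : SimpleGraph W) (a : ℕ)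
    (hH : ∀ le : W → W → Prop, IsForestOrder H le → ∃ x : W, a + 1 ≤ {y | le y x}.ncard) :
    ∀ d (le : TVert W d → TVert W d → Prop), IsForestOrder (TGraph H d) le →
      ∃ v, a * d + 1 ≤ {u | le u v}.ncard := by
  intro d
  induction d with
  | zero =>
    intro le h
    refine ⟨THandle W 0, ?_⟩
    have hmem : THandle W 0 ∈ {u | le u (THandle W 0)} := h.1 _
    have := (Set.ncard_pos (Set.toFinite _)).2 ⟨_, hmem⟩
    omega
  | succ d ih =>
    intro le h
    -- minimum of each copy
    have hmin : ∀ x : W, ∃ m : TVert W d, ∀ b, le (cpy x m) (cpy x b) := fun x =>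
      exists_min_connected (restrict_forest h x) (tgraph_connected H d)
    choose mv hmv using hmin
    -- the induced forest order on H
    have h' : IsForestOrder H (fun x y => le (cpy x (mv x)) (cpy y (mv y))) := by
      refine ⟨fun x => h.1 _, fun x y z h1 h2 => h.2.1 h1 h2, ?_, ?_, ?_⟩
      · intro x y h1 h2
        exact (cpy_inj (h.2.2.1 h1 h2)).1
      · intro v p q h1 h2
        exact h.2.2.2.1 _ _ _ h1 h2
      · intro x y hxy
        have hadj := adj_cpy_handles (H := H) (d := d) hxy
        have hx1 : le (cpy x (mv x)) (cpy x (THandle W d)) := hmv x _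
        have hy1 : le (cpy y (mv y)) (cpy y (THandle W d)) := hmv y _
        rcases h.2.2.2.2 hadj with hc | hc
        · -- le h_x h_y
          rcases h.2.2.2.1 (cpy y (THandle W d)) (cpy x (THandle W d)) (cpy y (mv y)) hc hy1
            with h2 | h2
          · exact Or.inl (h.2.1 hx1 h2)
          · exact h.2.2.2.1 (cpy x (THandle W d)) _ _ hx1 h2
        · rcases h.2.2.2.1 (cpy x (THandle W d)) (cpy y (THandle W d)) (cpy x (mv x)) hc hx1
            with h2 | h2
          · exact Or.inr (h.2.1 hy1 h2)
          · rcases h.2.2.2.1 (cpy y (THandle W d)) _ _ hy1 h2 with h3 | h3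
            · exact Or.inr h3
            · exact Or.inl h3
    obtain ⟨x₀, hx₀⟩ := hH _ h'
    obtain ⟨w, hw⟩ := ih (fun a b => le (cpy x₀ a) (cpy x₀ b)) (restrict_forest h x₀)
    refine ⟨cpy x₀ w, ?_⟩
    set S : Set W := {y | le (cpy y (mv y)) (cpy x₀ (mv x₀))} with hS
    set A1 : Set (TVert W (d + 1)) := cpy x₀ '' {b | le (cpy x₀ b) (cpy x₀ w)} with hA1
    set A2 : Set (TVert W (d + 1)) := (fun η => cpy η (mv η)) '' (S \ {x₀}) with hA2
    have hinj1 : Function.Injective (cpy (d := d) x₀) := fun a b hab => (cpy_inj hab).2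
    have hinj2 : Function.Injective (fun η : W => cpy η (mv η)) := by
      intro a b hab
      exact (cpy_inj hab).1
    have hcard1 : a * d + 1 ≤ A1.ncard := by
      rw [hA1, Set.ncard_image_of_injective _ hinj1]; exact hw
    have hx₀S : x₀ ∈ S := h.1 _
    have hcard2 : a ≤ A2.ncard := by
      rw [hA2, Set.ncard_image_of_injective _ hinj2,
        Set.ncard_diff_singleton_of_mem hx₀S]
      have : a + 1 ≤ S.ncard := hx₀
      omega
    have hdisj : Disjoint A1 A2 := by
      rw [Set.disjoint_left]
      rintro u ⟨b, -, rfl⟩ ⟨η, hη, hη2⟩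
      exact hη.2 (Set.mem_singleton_iff.2 (cpy_inj hη2).1)
    have hsub : A1 ∪ A2 ⊆ {u | le u (cpy x₀ w)} := by
      rintro u (⟨b, hb, rfl⟩ | ⟨η, hη, rfl⟩)
      · exact hb
      · exact h.2.1 hη.1 (hmv x₀ w)
    calc a * (d + 1) + 1 = (a * d + 1) + a := by ring
      _ ≤ A1.ncard + A2.ncard := by omega
      _ = (A1 ∪ A2).ncard := (Set.ncard_union_eq hdisj (Set.toFinite _) (Set.toFinite _)).symm
      _ ≤ _ := Set.ncard_le_ncard hsub (Set.toFinite _)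

lemma treedepthLE_card {V : Type} [Finite V] (G : SimpleGraph V) :
    TreedepthLE G (Nat.card V) := by
  classical
  let e := Finite.equivFin V
  refine ⟨fun u v => e u ≤ e v, ⟨fun u => le_refl _, fun u v w h1 h2 => le_trans h1 h2,
    fun u v h1 h2 => e.injective (le_antisymm h1 h2),
    fun v x y _ _ => le_total _ _, fun u v _ => le_total _ _⟩, fun v => ?_⟩
  calc {u | e u ≤ e v}.ncard ≤ (Set.univ : Set V).ncard :=
        Set.ncard_le_ncard (Set.subset_univ _) Set.finite_univ
    _ = Nat.card V := Set.ncard_univ V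

/-- For `d ≥ 0`, `a ≥ 1` and `n ≥ 2^a`, the graph `T_d(P_n)` has treedepth at
least `a·d + 1`. -/
theorem treedepth_TGraph_path (d a n : ℕ) (ha : 1 ≤ a) (hn : 2 ^ a ≤ n) :
    a * d + 1 ≤ treedepth (TGraph (SimpleGraph.pathGraph n) d) := by
  have hne : {k | TreedepthLE (TGraph (SimpleGraph.pathGraph n) d) k}.Nonempty :=
    ⟨_, treedepthLE_card _⟩
  obtain ⟨le, hfo, hbd⟩ := Nat.sInf_mem hne
  obtain ⟨v, hv⟩ := tgraph_lower (SimpleGraph.pathGraph n) a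
    (fun le h => path_base a hn h) d le hfo
  exact hv.trans (hbd v)
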